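/- Let E be a directed graph and R a unital commutative ring. The assignments f ↦ φ_f and φ ↦ f_φ are mutually inverse bijections between the set of saturated functions T_E* → L(R) and the set of graded ideal functions Ê⁰ → L(R). -/

import Mathlib

namespace LPAQuot

/-- A directed graph `E = (E⁰, E¹, s, r)` with vertex type `V` and edge type `E`. -/
structure Graph (V E : Type) where
  s : E → V
  r : E → V

namespace Graph

variable {V E R : Type} [CommRing R] (G : Graph V E)

/-- `u` reaches `w` through a (possibly trivial) path. -/
def Reaches (u w : V) : Prop :=
  Relation.ReflTransGen (fun a b => ∃ e, G.s e = a ∧ G.r e = b) u w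

/-- A set of vertices is hereditary if it is closed under ranges of paths. -/
def IsHereditary (H : Set V) : Prop :=
  ∀ ⦃u w : V⦄, u ∈ H → G.Reaches u w → w ∈ H

/-- A vertex is regular if `0 < |s⁻¹(v)| < ∞`. -/
def IsRegular (v : V) : Prop :=
  {e | G.s e = v}.Finite ∧ {e | G.s e = v}.Nonempty

/-- A vertex is an infinite emitter if `|s⁻¹(v)| = ∞`. -/
def IsInfiniteEmitter (v : V) : Prop := {e | G.s e = v}.Infinite

/-- A hereditary set is saturated if every regular vertex all of whose emitted
edges have range in `H` lies in `H`. -/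
def IsSaturated (H : Set V) : Prop :=
  ∀ ⦃v : V⦄, G.IsRegular v → (∀ e, G.s e = v → G.r e ∈ H) → v ∈ H

/-- Hereditary and saturated. -/
def IsHS (H : Set V) : Prop := G.IsHereditary H ∧ G.IsSaturated H

/-- `v` is a breaking vertex of `H`: an infinite emitter `v ∉ H` with
`0 < |s⁻¹(v) ∩ r⁻¹(E⁰∖H)| < ∞`. -/
def IsBreaking (H : Set V) (v : V) : Prop :=
  G.IsInfiniteEmitter v ∧ v ∉ H ∧
    {e | G.s e = v ∧ G.r e ∉ H}.Finite ∧ {e | G.s e = v ∧ G.r e ∉ H}.Nonempty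

/-- `H'` is `S`-closed: if `v ∈ S` and `r(s⁻¹(v)) ⊆ H'` then `v ∈ H'`. -/
def SClosed (S H' : Set V) : Prop :=
  ∀ v ∈ S, (∀ e, G.s e = v → G.r e ∈ H') → v ∈ H'

/-- The `S`-saturation of `H`: the smallest hereditary saturated `S`-closed set
containing `H`. -/
def SSat (H S : Set V) : Set V :=
  ⋂₀ {H' | H ⊆ H' ∧ G.IsHS H' ∧ G.SClosed S H'}

/-- `H_v`, the intersection of all hereditary saturated sets containing `v`. -/
def Hv (v : V) : Set V := ⋂₀ {H | G.IsHS H ∧ v ∈ H}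

lemma mem_Hv (v : V) : v ∈ G.Hv v := by
  simp only [Hv, Set.mem_sInter, Set.mem_setOf_eq]
  exact fun H hH => hH.2

lemma Hv_hereditary (v : V) : G.IsHereditary (G.Hv v) := by
  intro u w hu hw
  simp only [Hv, Set.mem_sInter, Set.mem_setOf_eq] at hu ⊢
  exact fun H hH => hH.1.1 (hu H hH) hw

lemma Hv_saturated (v : V) : G.IsSaturated (G.Hv v) := by
  intro w hw hr
  simp only [Hv, Set.mem_sInter, Set.mem_setOf_eq]
  intro H hH
  refine hH.1.2 hw fun e he => ?_
  have h := hr e he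
  simp only [Hv, Set.mem_sInter, Set.mem_setOf_eq] at h
  exact h H hH

/-- An admissible pair `(H, S)` other than `(∅, ∅)`; i.e. an element of `T_E^*`. -/
structure APair (Γ : Graph V E) where
  H : Set V
  S : Set V
  hered : Γ.IsHereditary H
  sat : Γ.IsSaturated H
  breaking : ∀ v ∈ S, Γ.IsBreaking H v
  nontrivial : H.Nonempty ∨ S.Nonempty

/-- The first component `𝔥` of the join of a family of admissible pairs:
the `(⋃ᵢ Sᵢ)`-saturation of `⋃ᵢ Hᵢ`. -/
def joinH {ι : Type} (P : ι → G.APair) : Set V :=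
  G.SSat (⋃ i, (P i).H) (⋃ i, (P i).S)

/-- The second component `𝔰 = (⋃ᵢ Sᵢ) ∖ 𝔥` of the join of a family of admissible pairs. -/
def joinS {ι : Type} (P : ι → G.APair) : Set V :=
  (⋃ i, (P i).S) \ G.joinH P

/-- First component of the binary join `(H₁,S₁) ∨ (H₂,S₂)`. -/
def join2H (p₁ p₂ : G.APair) : Set V := G.SSat (p₁.H ∪ p₂.H) (p₁.S ∪ p₂.S)

/-- Second component of the binary join `(H₁,S₁) ∨ (H₂,S₂)`. -/
def join2S (p₁ p₂ : G.APair) : Set V := (p₁.S ∪ p₂.S) \ G.join2H p₁ p₂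

/-- A saturated function `f : T_E^* → L(R)`:
`f(⋁ᵢ (Hᵢ,Sᵢ)) = ⋂ᵢ f((Hᵢ,Sᵢ))` for every family of admissible pairs. -/
def IsSaturatedFun (f : G.APair → Ideal R) : Prop :=
  ∀ (ι : Type) (P : ι → G.APair) (q : G.APair),
    q.H = G.joinH P → q.S = G.joinS P → f q = ⨅ i, f (P i)

/-- The set `Ê⁰` of extended vertices: vertices together with symbols `v^H`
for `H` hereditary saturated and `v ∈ B_H`. -/
abbrev ExtVertex (Γ : Graph V E) : Type :=
  V ⊕ {p : Set V × V // Γ.IsHS p.1 ∧ Γ.IsBreaking p.1 p.2}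

/-- The admissible pair `(H_u, ∅)`. -/
def pairOfVertex (u : V) : G.APair where
  H := G.Hv u
  S := ∅
  hered := G.Hv_hereditary u
  sat := G.Hv_saturated u
  breaking := fun v hv => absurd hv (Set.notMem_empty v)
  nontrivial := Or.inl ⟨u, G.mem_Hv u⟩

/-- The admissible pair `(H, {v})` for `v ∈ B_H`. -/
def pairOfBreaking (H : Set V) (v : V) (hH : G.IsHS H) (hv : G.IsBreaking H v) :
    G.APair where
  H := H
  S := {v}
  hered := hH.1
  sat := hH.2
  breaking := fun w hw => by
    rw [Set.mem_singleton_iff] at hw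
    subst hw
    exact hv
  nontrivial := Or.inr ⟨v, rfl⟩

/-- The function `φ_f : Ê⁰ → L(R)` associated to a saturated function `f`:
`φ_f(u) = f((H_u, ∅))` and `φ_f(v^H) = f((H, {v}))`. -/
def phiOf (f : G.APair → Ideal R) : G.ExtVertex → Ideal R :=
  Sum.elim (fun u => f (G.pairOfVertex u))
    (fun p => f (G.pairOfBreaking p.1.1 p.1.2 p.2.1 p.2.2))

/-- `⋂_{u∈H} φ(u) ∩ ⋂_{v∈S} φ(v^H)`, that is, `f_φ((H,S))`. -/
def phiPair (φ : G.ExtVertex → Ideal R) (p : G.APair) : Ideal R :=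
  (⨅ u : p.H, φ (Sum.inl u.1)) ⊓
    ⨅ v : p.S, φ (Sum.inr ⟨(p.H, v.1), ⟨p.hered, p.sat⟩, p.breaking v.1 v.2⟩)

/-- The function `f_φ : T_E^* → L(R)` associated to `φ : Ê⁰ → L(R)`. -/
def satFunOf (φ : G.ExtVertex → Ideal R) : G.APair → Ideal R :=
  fun p => G.phiPair φ p

/-- A graded ideal function `φ : Ê⁰ → L(R)`: it satisfies
(i) `⋂_{u∈𝔥} φ(u) ∩ ⋂_{v∈𝔰} φ(v^𝔥)` splits over binary joins,
(ii) `H_v ⊆ H_u` implies `φ(u) ⊆ φ(v)`,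
(iii) `φ(v^H) ⊆ ⋂_{w∈H} φ(w)`. -/
def IsGradedIdealFun (φ : G.ExtVertex → Ideal R) : Prop :=
  (∀ p₁ p₂ q : G.APair, q.H = G.join2H p₁ p₂ → q.S = G.join2S p₁ p₂ →
      G.phiPair φ q = G.phiPair φ p₁ ⊓ G.phiPair φ p₂) ∧
  (∀ u v : V, G.Hv v ⊆ G.Hv u → φ (Sum.inl u) ≤ φ (Sum.inl v)) ∧
  (∀ (H : Set V) (hH : G.IsHS H) (v : V) (hv : G.IsBreaking H v),
      φ (Sum.inr ⟨(H, v), hH, hv⟩) ≤ ⨅ w : H, φ (Sum.inl w.1))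

/-- The extended order `x ≥ y` on `Ê⁰`: on vertices it is the path order, each
breaking vertex `v` lies above the symbol `v^H`, and the symbols `v^H` are sinks. -/
def extGE (Γ : Graph V E) : Γ.ExtVertex → Γ.ExtVertex → Prop
  | Sum.inl u, Sum.inl w => Γ.Reaches u w
  | Sum.inl u, Sum.inr p => Γ.Reaches u p.1.2
  | Sum.inr _, Sum.inl _ => False
  | Sum.inr p, Sum.inr q => p = q


/-! ### Auxiliary lemmas -/

lemma empty_isHS : G.IsHS (∅ : Set V) := by
  constructor
  · intro u w hu _; exact absurd hu (Set.notMem_empty u)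
  · intro v hv hr
    obtain ⟨e, he⟩ := hv.2
    exact absurd (hr e he) (Set.notMem_empty _)

lemma subset_sSat (H S : Set V) : H ⊆ G.SSat H S := fun _ hx =>
  Set.mem_sInter.2 fun _ hH' => hH'.1 hx

lemma sSat_subset {H S H' : Set V} (h1 : H ⊆ H') (h2 : G.IsHS H') (h3 : G.SClosed S H') :
    G.SSat H S ⊆ H' := fun x hx => Set.mem_sInter.1 hx H' ⟨h1, h2, h3⟩

lemma sSat_isHS (H S : Set V) : G.IsHS (G.SSat H S) := by
  constructor
  · intro u w hu hr
    exact Set.mem_sInter.2 fun H' hH' => hH'.2.1.1 (Set.mem_sInter.1 hu H' hH') hr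
  · intro v hv hr
    exact Set.mem_sInter.2 fun H' hH' =>
      hH'.2.1.2 hv fun e he => Set.mem_sInter.1 (hr e he) H' hH'

lemma sSat_sclosed (H S : Set V) : G.SClosed S (G.SSat H S) := by
  intro v hv hr
  exact Set.mem_sInter.2 fun H' hH' =>
    hH'.2.2 v hv fun e he => Set.mem_sInter.1 (hr e he) H' hH'

lemma sclosed_mono {S S' H' : Set V} (h : S' ⊆ S) (hc : G.SClosed S H') : G.SClosed S' H' :=
  fun v hv => hc v (h hv)

lemma sSat_eq_of {H S T : Set V} (hsub : H ⊆ T) (hhs : G.IsHS T) (hcl : G.SClosed S T)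
    (hT : T ⊆ G.SSat H S) : G.SSat H S = T :=
  subset_antisymm (G.sSat_subset hsub hhs hcl) hT

lemma Hv_isHS (v : V) : G.IsHS (G.Hv v) := ⟨G.Hv_hereditary v, G.Hv_saturated v⟩

lemma Hv_subset {H : Set V} {u : V} (h : G.IsHS H) (hu : u ∈ H) : G.Hv u ⊆ H :=
  Set.sInter_subset_of_mem ⟨h, hu⟩

lemma Hv_mono {u w : V} (h : w ∈ G.Hv u) : G.Hv w ⊆ G.Hv u :=
  G.Hv_subset (G.Hv_isHS u) h

/-- The inductive generation of the `S`-saturation. -/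
inductive Gen (Γ : Graph V E) (X S : Set V) : V → Prop
  | base {x} : x ∈ X → Gen Γ X S x
  | step {u e} : Gen Γ X S u → Γ.s e = u → Gen Γ X S (Γ.r e)
  | sat {v} : Γ.IsRegular v → (∀ e, Γ.s e = v → Gen Γ X S (Γ.r e)) → Gen Γ X S v
  | scl {v} : v ∈ S → (∀ e, Γ.s e = v → Gen Γ X S (Γ.r e)) → Gen Γ X S v

lemma gen_subset {X S H' : Set V} (h1 : X ⊆ H') (h2 : G.IsHS H') (h3 : G.SClosed S H') :
    ∀ {v}, Gen G X S v → v ∈ H' := by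
  intro v hv
  induction hv with
  | base hx => exact h1 hx
  | step _ hs ih => exact h2.1 ih (Relation.ReflTransGen.single ⟨_, hs, rfl⟩)
  | sat hreg _ ih => exact h2.2 hreg fun e he => ih e he
  | scl hvS _ ih => exact h3 _ hvS fun e he => ih e he

lemma sSat_eq_gen (X S : Set V) : G.SSat X S = {v | Gen G X S v} := by
  apply G.sSat_eq_of
  · exact fun x hx => Gen.base hx
  · constructor
    · intro u w hu hr
      induction hr with
      | refl => exact hu
      | tail _ h ih =>
        obtain ⟨e, he, hre⟩ := h
        exact hre ▸ Gen.step ih he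
    · exact fun v hv hr => Gen.sat hv hr
  · exact fun v hv hr => Gen.scl hv hr
  · intro v hv
    exact Set.mem_sInter.2 fun H' hH' => G.gen_subset hH'.1 hH'.2.1 hH'.2.2 hv

lemma phiPair_le_inl (φ : G.ExtVertex → Ideal R) (p : G.APair) {u : V} (hu : u ∈ p.H) :
    G.phiPair φ p ≤ φ (Sum.inl u) :=
  inf_le_left.trans (iInf_le _ (⟨u, hu⟩ : p.H))

lemma phiPair_le_inr (φ : G.ExtVertex → Ideal R) (p : G.APair) {v : V} (hv : v ∈ p.S) :
    G.phiPair φ p ≤ φ (Sum.inr ⟨(p.H, v), ⟨p.hered, p.sat⟩, p.breaking v hv⟩) :=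
  inf_le_right.trans (iInf_le _ (⟨v, hv⟩ : p.S))

/-- The sub-pair `(H, {v})` of an admissible pair `(H, S)` with `v ∈ S`. -/
def subPairS (p : G.APair) (v : V) (hv : v ∈ p.S) : G.APair where
  H := p.H
  S := {v}
  hered := p.hered
  sat := p.sat
  breaking := fun w hw => by
    rw [Set.mem_singleton_iff] at hw; subst hw; exact p.breaking _ hv
  nontrivial := Or.inr ⟨v, rfl⟩

lemma le_phiPair_subPairS (φ : G.ExtVertex → Ideal R) (p : G.APair) {v : V} (hv : v ∈ p.S) :
    G.phiPair φ p ≤ G.phiPair φ (G.subPairS p v hv) := by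
  refine le_inf inf_le_left (le_iInf fun v' => ?_)
  obtain ⟨v', hv'⟩ := v'
  have hv'' : v' = v := hv'
  subst hv''
  exact G.phiPair_le_inr φ p hv

lemma le_phi_sSat (φ : G.ExtVertex → Ideal R) (hφ : G.IsGradedIdealFun φ) (I : Ideal R)
    {T : Set V} (hfin : T.Finite) :
    (∀ x ∈ T, I ≤ φ (Sum.inl x)) → ∀ u ∈ G.SSat T ∅, I ≤ φ (Sum.inl u) := by
  refine Set.Finite.induction_on
    (motive := fun T _ => (∀ x ∈ T, I ≤ φ (Sum.inl x)) → ∀ u ∈ G.SSat T ∅, I ≤ φ (Sum.inl u))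
    T hfin ?_ ?_
  ·
    intro _ u hu
    have h0 : G.SSat (∅ : Set V) ∅ = (∅ : Set V) :=
      G.sSat_eq_of subset_rfl G.empty_isHS
        (fun w hw => absurd hw (Set.notMem_empty w)) (Set.empty_subset _)
    rw [h0] at hu
    exact absurd hu (Set.notMem_empty u)
  · intro x T' hxT' hfin' ih hT u hu
    have hx : I ≤ φ (Sum.inl x) := hT x (Set.mem_insert x T')
    rcases T'.eq_empty_or_nonempty with h0 | hne
    · subst h0
      have hHv : G.SSat (insert x (∅ : Set V)) ∅ = G.Hv x := by
        apply G.sSat_eq_of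
        · intro y hy
          rcases Set.mem_insert_iff.1 hy with rfl | hy
          · exact G.mem_Hv y
          · exact absurd hy (Set.notMem_empty y)
        · exact G.Hv_isHS x
        · exact fun w hw => absurd hw (Set.notMem_empty w)
        · intro y hy
          exact Set.mem_sInter.2 fun H' hH' =>
            Set.mem_sInter.1 hy H' ⟨hH'.2.1, hH'.1 (Set.mem_insert x ∅)⟩
      rw [hHv] at hu
      exact hx.trans (hφ.2.1 x u (G.Hv_mono hu))
    · -- binary join of (SSat T' ∅, ∅) and (H_x, ∅)
      set p₁ : G.APair :=
        ⟨G.SSat T' ∅, ∅, (G.sSat_isHS T' ∅).1, (G.sSat_isHS T' ∅).2,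
          fun w hw => absurd hw (Set.notMem_empty w),
          Or.inl (hne.mono (G.subset_sSat T' ∅))⟩ with hp₁
      set p₂ : G.APair := G.pairOfVertex x with hp₂
      have hxin : x ∈ G.join2H p₁ p₂ :=
        G.subset_sSat _ _ (Or.inr (G.mem_Hv x))
      set q : G.APair :=
        ⟨G.join2H p₁ p₂, ∅, (G.sSat_isHS _ _).1, (G.sSat_isHS _ _).2,
          fun w hw => absurd hw (Set.notMem_empty w), Or.inl ⟨x, hxin⟩⟩ with hq'
      have hq := hφ.1 p₁ p₂ q rfl (by
        show (∅ : Set V) = G.join2S p₁ p₂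
        have : (p₁.S ∪ p₂.S : Set V) = ∅ := by
          simp [hp₁, hp₂, Graph.pairOfVertex]
        rw [Graph.join2S, this, Set.empty_diff])
      have h1 : I ≤ G.phiPair φ p₁ :=
        le_inf (le_iInf fun u' => ih (fun y hy => hT y (Set.mem_insert_of_mem x hy)) u'.1 u'.2)
          (le_iInf fun v' => absurd v'.2 (Set.notMem_empty _))
      have h2 : I ≤ G.phiPair φ p₂ :=
        le_inf (le_iInf fun u' => hx.trans (hφ.2.1 x u'.1 (G.Hv_mono u'.2)))
          (le_iInf fun v' => absurd v'.2 (Set.notMem_empty _))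
      have hset : G.SSat (insert x T') ∅ = G.join2H p₁ p₂ := by
        apply subset_antisymm
        · apply G.sSat_subset
          · intro y hy
            rcases Set.mem_insert_iff.1 hy with rfl | hy
            · exact G.subset_sSat _ _ (Or.inr (G.mem_Hv y))
            · exact G.subset_sSat _ _ (Or.inl (G.subset_sSat T' ∅ hy))
          · exact G.sSat_isHS _ _
          · exact fun w hw => absurd hw (Set.notMem_empty w)
        · apply G.sSat_subset
          · refine Set.union_subset ?_ ?_
            · apply G.sSat_subset
              · exact fun y hy => G.subset_sSat _ _ (Set.mem_insert_of_mem x hy)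
              · exact G.sSat_isHS _ _
              · exact fun w hw => absurd hw (Set.notMem_empty w)
            · exact G.Hv_subset (G.sSat_isHS _ _) (G.subset_sSat _ _ (Set.mem_insert x T'))
          · exact G.sSat_isHS _ _
          · intro w hw
            rcases hw with hw | hw <;> exact absurd hw (Set.notMem_empty w)
      have hIq : I ≤ G.phiPair φ q := by rw [hq]; exact le_inf h1 h2
      rw [hset] at hu
      exact hIq.trans (G.phiPair_le_inl φ q hu)

lemma key_le (φ : G.ExtVertex → Ideal R) (hφ : G.IsGradedIdealFun φ) {ι : Type}
    (P : ι → G.APair) :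
    ∀ {u : V}, Gen G (⋃ i, (P i).H) (⋃ i, (P i).S) u →
      (⨅ i, G.phiPair φ (P i)) ≤ φ (Sum.inl u) := by
  intro u hu
  induction hu with
  | base hx =>
    obtain ⟨i, hi⟩ := Set.mem_iUnion.1 hx
    exact (iInf_le _ i).trans (G.phiPair_le_inl φ (P i) hi)
  | step _ hs ih =>
    refine ih.trans (hφ.2.1 _ _ (G.Hv_mono ?_))
    exact G.Hv_hereditary _ (G.mem_Hv _) (Relation.ReflTransGen.single ⟨_, hs, rfl⟩)
  | @sat v hreg _ ih =>
    refine G.le_phi_sSat φ hφ _ ((hreg.1.image G.r)) ?_ v ?_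
    · rintro x ⟨e, he, rfl⟩
      exact ih e he
    · exact (G.sSat_isHS _ ∅).2 hreg fun e he =>
        G.subset_sSat _ ∅ (Set.mem_image_of_mem G.r he)
  | @scl v hvS hall ih =>
    obtain ⟨j, hj⟩ := Set.mem_iUnion.1 hvS
    have hbrk := (P j).breaking _ hj
    have h1 : (⨅ i, G.phiPair φ (P i)) ≤ G.phiPair φ (G.subPairS (P j) v hj) :=
      (iInf_le _ j).trans (G.le_phiPair_subPairS φ (P j) hj)
    set p₁ := G.subPairS (P j) v hj with hp₁
    set Tv := G.r '' {e | G.s e = v ∧ G.r e ∉ (P j).H} with hTv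
    set p₂ : G.APair :=
      ⟨G.SSat Tv ∅, ∅, (G.sSat_isHS _ _).1, (G.sSat_isHS _ _).2,
        fun w hw => absurd hw (Set.notMem_empty w),
        Or.inl ((hbrk.2.2.2.image G.r).mono (G.subset_sSat _ _))⟩ with hp₂
    have h2 : (⨅ i, G.phiPair φ (P i)) ≤ G.phiPair φ p₂ := by
      refine le_inf (le_iInf fun u' => ?_) (le_iInf fun v' => absurd v'.2 (Set.notMem_empty _))
      refine G.le_phi_sSat φ hφ _ (hbrk.2.2.1.image G.r) ?_ u'.1 u'.2
      rintro x ⟨e, ⟨he, _⟩, rfl⟩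
      exact ih e he
    have hvin : v ∈ G.join2H p₁ p₂ := by
      refine G.sSat_sclosed _ _ v (Or.inl rfl) fun e he => ?_
      by_cases hre : G.r e ∈ (P j).H
      · exact G.subset_sSat _ _ (Or.inl hre)
      · exact G.subset_sSat _ _ (Or.inr (G.subset_sSat Tv ∅ ⟨e, ⟨he, hre⟩, rfl⟩))
    set q : G.APair :=
      ⟨G.join2H p₁ p₂, ∅, (G.sSat_isHS _ _).1, (G.sSat_isHS _ _).2,
        fun w hw => absurd hw (Set.notMem_empty w), Or.inl ⟨v, hvin⟩⟩ with hq'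
    have hq := hφ.1 p₁ p₂ q rfl (by
      show (∅ : Set V) = G.join2S p₁ p₂
      symm
      rw [Graph.join2S, Set.diff_eq_empty]
      intro x hx
      rcases hx with hx | hx
      · have : x = v := hx
        exact this ▸ hvin
      · exact absurd hx (Set.notMem_empty x))
    have hIq : (⨅ i, G.phiPair φ (P i)) ≤ G.phiPair φ q := by
      rw [hq]; exact le_inf h1 h2
    exact hIq.trans (G.phiPair_le_inl φ q hvin)

lemma part2 (φ : G.ExtVertex → Ideal R) (hφ : G.IsGradedIdealFun φ) :
    G.IsSaturatedFun (G.satFunOf φ) := by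
  intro ι P q hH hS
  obtain ⟨qH, qS, qhered, qsat, qbrk, qnt⟩ := q
  dsimp at hH hS
  subst hH; subst hS
  show G.phiPair φ _ = ⨅ i, G.phiPair φ (P i)
  have hsubH : ∀ i, (P i).H ⊆ G.joinH P := fun i =>
    (Set.subset_iUnion (fun i => (P i).H) i).trans (G.subset_sSat _ _)
  have hsubS : ∀ i, (P i).S ⊆ ⋃ i, (P i).S := fun i =>
    Set.subset_iUnion (fun i => (P i).S) i
  have hJhs : G.IsHS (G.joinH P) := G.sSat_isHS _ _
  have hJcl : G.SClosed (⋃ i, (P i).S) (G.joinH P) := G.sSat_sclosed _ _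
  have hgen : ∀ u ∈ G.joinH P, (⨅ i, G.phiPair φ (P i)) ≤ φ (Sum.inl u) := by
    intro u hu
    refine G.key_le φ hφ P ?_
    have h := G.sSat_eq_gen (⋃ i, (P i).H) (⋃ i, (P i).S)
    rw [Graph.joinH, h] at hu
    exact hu
  apply le_antisymm
  · refine le_iInf fun i => ?_
    have hjH : G.joinH P = G.join2H (P i)
        ⟨G.joinH P, G.joinS P, qhered, qsat, qbrk, qnt⟩ := by
      refine (G.sSat_eq_of ?_ hJhs ?_ ?_).symm
      · exact Set.union_subset (hsubH i) subset_rfl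
      · exact G.sclosed_mono (Set.union_subset (hsubS i) Set.diff_subset) hJcl
      · exact fun x hx => G.subset_sSat _ _ (Or.inr hx)
    have hjS : G.joinS P = G.join2S (P i)
        ⟨G.joinH P, G.joinS P, qhered, qsat, qbrk, qnt⟩ := by
      rw [Graph.join2S, ← hjH]
      ext x
      constructor
      · intro hx
        exact ⟨Or.inr hx, hx.2⟩
      · rintro ⟨hx | hx, hnx⟩
        · exact ⟨hsubS i hx, hnx⟩
        · exact hx
    have := hφ.1 (P i) ⟨G.joinH P, G.joinS P, qhered, qsat, qbrk, qnt⟩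
      ⟨G.joinH P, G.joinS P, qhered, qsat, qbrk, qnt⟩ hjH hjS
    exact this.le.trans inf_le_left
  · refine le_inf (le_iInf fun u => hgen u.1 u.2) (le_iInf fun v => ?_)
    obtain ⟨v, hv⟩ := v
    have hvS : v ∈ ⋃ i, (P i).S := hv.1
    have hvnJ : v ∉ G.joinH P := hv.2
    obtain ⟨j, hj⟩ := Set.mem_iUnion.1 hvS
    have h1 : (⨅ i, G.phiPair φ (P i)) ≤ G.phiPair φ (G.subPairS (P j) v hj) :=
      (iInf_le _ j).trans (G.le_phiPair_subPairS φ (P j) hj)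
    set p₁ := G.subPairS (P j) v hj with hp₁
    have hbrkJ : G.IsBreaking (G.joinH P) v := qbrk v hv
    set q₂ : G.APair :=
      ⟨G.joinH P, {v}, qhered, qsat,
        fun w hw => by
          have hw' : w = v := hw
          subst hw'; exact qbrk w hv,
        Or.inr ⟨v, rfl⟩⟩ with hq₂
    rcases Set.eq_empty_or_nonempty (G.joinH P) with hJe | ⟨w₀, hw₀⟩
    · -- degenerate case: the join has empty vertex part, use p₂ := p₁
      have hjH : G.join2H p₁ p₁ = G.joinH P := by
        rw [hJe]
        refine subset_antisymm (G.sSat_subset ?_ G.empty_isHS ?_ ) (Set.empty_subset _)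
        · rw [← hJe]
          exact Set.union_subset (hsubH j) (hsubH j)
        · rw [← hJe]
          refine G.sclosed_mono ?_ hJcl
          intro x hx
          rcases hx with hx | hx <;> · have : x = v := hx; exact this ▸ hvS
      have hjS : ({v} : Set V) = G.join2S p₁ p₁ := by
        rw [Graph.join2S, hjH]
        ext x
        constructor
        · intro hx
          have hx' : x = v := hx
          exact ⟨Or.inl hx, hx' ▸ hvnJ⟩
        · rintro ⟨hx | hx, _⟩ <;> exact hx
      have heq := hφ.1 p₁ p₁ q₂ hjH.symm hjS
      refine ((le_inf h1 h1).trans heq.ge).trans (G.phiPair_le_inr φ q₂ rfl)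
    · set p₂ : G.APair :=
        ⟨G.joinH P, ∅, qhered, qsat, fun w hw => absurd hw (Set.notMem_empty w),
          Or.inl ⟨w₀, hw₀⟩⟩ with hp₂
      have h2 : (⨅ i, G.phiPair φ (P i)) ≤ G.phiPair φ p₂ :=
        le_inf (le_iInf fun u => hgen u.1 u.2)
          (le_iInf fun v' => absurd v'.2 (Set.notMem_empty _))
      have hjH : G.joinH P = G.join2H p₁ p₂ := by
        refine (G.sSat_eq_of ?_ hJhs ?_ ?_).symm
        · exact Set.union_subset (hsubH j) subset_rfl
        · refine G.sclosed_mono ?_ hJcl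
          intro x hx
          rcases hx with hx | hx
          · have : x = v := hx; exact this ▸ hvS
          · exact absurd hx (Set.notMem_empty x)
        · exact fun x hx => G.subset_sSat _ _ (Or.inr hx)
      have hjS : ({v} : Set V) = G.join2S p₁ p₂ := by
        rw [Graph.join2S, ← hjH]
        ext x
        constructor
        · intro hx
          have hx' : x = v := hx
          exact ⟨Or.inl hx, hx' ▸ hvnJ⟩
        · rintro ⟨hx | hx, _⟩
          · exact hx
          · exact absurd hx (Set.notMem_empty x)
      have heq := hφ.1 p₁ p₂ q₂ hjH hjS
      refine ((le_inf h1 h2).trans heq.ge).trans (G.phiPair_le_inr φ q₂ rfl)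

/-- The canonical family of admissible pairs associated to an admissible pair. -/
def canonFam (p : G.APair) : (↥p.H ⊕ ↥p.S) → G.APair :=
  Sum.elim (fun u => G.pairOfVertex u.1)
    (fun v => G.pairOfBreaking p.H v.1 ⟨p.hered, p.sat⟩ (p.breaking v.1 v.2))

lemma canonFam_H (p : G.APair) : p.H = G.joinH (G.canonFam p) := by
  refine (G.sSat_eq_of ?_ ⟨p.hered, p.sat⟩ ?_ ?_).symm
  · refine Set.iUnion_subset fun i => ?_
    cases i with
    | inl u => exact G.Hv_subset ⟨p.hered, p.sat⟩ u.2
    | inr v => exact subset_rfl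
  · intro w hw hr
    obtain ⟨i, hi⟩ := Set.mem_iUnion.1 hw
    cases i with
    | inl u => exact absurd hi (Set.notMem_empty w)
    | inr v =>
      exfalso
      have hb := p.breaking v.1 v.2
      have hw' : w = v.1 := hi
      subst hw'
      obtain ⟨e, he, hre⟩ := hb.2.2.2
      exact hre (hr e he)
  · intro x hx
    exact G.subset_sSat _ _ (Set.mem_iUnion.2 ⟨Sum.inl ⟨x, hx⟩, G.mem_Hv x⟩)

lemma canonFam_S (p : G.APair) : p.S = G.joinS (G.canonFam p) := by
  have hU : (⋃ i, (G.canonFam p i).S) = p.S := by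
    ext x
    constructor
    · intro hx
      obtain ⟨i, hi⟩ := Set.mem_iUnion.1 hx
      cases i with
      | inl u => exact absurd hi (Set.notMem_empty x)
      | inr v =>
        have hx' : x = v.1 := hi
        exact hx' ▸ v.2
    · intro hx
      exact Set.mem_iUnion.2 ⟨Sum.inr ⟨x, hx⟩, rfl⟩
  rw [Graph.joinS, ← G.canonFam_H p, hU]
  ext x
  constructor
  · intro hx
    exact ⟨hx, (p.breaking x hx).2.1⟩
  · exact And.left

lemma phiPair_phiOf (f : G.APair → Ideal R) (hf : G.IsSaturatedFun f) (p : G.APair) :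
    G.phiPair (G.phiOf f) p = f p := by
  have h := hf _ (G.canonFam p) p (G.canonFam_H p) (G.canonFam_S p)
  rw [h, iInf_sum]
  rfl

/-- Bool-indexed families realize binary joins. -/
lemma unionBool {α : Type} (p₁ p₂ : α) (g : α → Set V) :
    (⋃ b : Bool, g (bif b then p₁ else p₂)) = g p₁ ∪ g p₂ := by
  ext x
  simp only [Set.mem_iUnion, Bool.exists_bool, Set.mem_union, cond_false, cond_true]
  exact Or.comm

lemma joinH_bool (p₁ p₂ : G.APair) :
    G.joinH (fun b => bif b then p₁ else p₂) = G.join2H p₁ p₂ := by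
  rw [Graph.joinH, Graph.join2H, unionBool p₁ p₂ (fun p => p.H),
    unionBool p₁ p₂ (fun p => p.S)]

lemma joinS_bool (p₁ p₂ : G.APair) :
    G.joinS (fun b => bif b then p₁ else p₂) = G.join2S p₁ p₂ := by
  rw [Graph.joinS, Graph.join2S, unionBool p₁ p₂ (fun p => p.S), G.joinH_bool p₁ p₂]

lemma part1 (f : G.APair → Ideal R) (hf : G.IsSaturatedFun f) :
    G.IsGradedIdealFun (G.phiOf f) := by
  refine ⟨?_, ?_, ?_⟩
  · intro p₁ p₂ q hH hS
    rw [G.phiPair_phiOf f hf, G.phiPair_phiOf f hf, G.phiPair_phiOf f hf]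
    have hfam := hf Bool (fun b => bif b then p₁ else p₂) q
      (by rw [hH, G.joinH_bool]) (by rw [hS, G.joinS_bool])
    rw [hfam, iInf_bool_eq]
    rfl
  · intro u v huv
    show f (G.pairOfVertex u) ≤ f (G.pairOfVertex v)
    have hjH : G.Hv u = G.join2H (G.pairOfVertex u) (G.pairOfVertex v) := by
      refine (G.sSat_eq_of ?_ (G.Hv_isHS u) ?_ ?_).symm
      · exact Set.union_subset subset_rfl huv
      · intro w hw
        rcases hw with hw | hw <;> exact absurd hw (Set.notMem_empty w)
      · exact fun x hx => G.subset_sSat _ _ (Or.inl hx)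
    have hjS : (∅ : Set V) = G.join2S (G.pairOfVertex u) (G.pairOfVertex v) := by
      rw [Graph.join2S]
      show _ = ((∅ : Set V) ∪ ∅) \ _
      rw [Set.empty_union, Set.empty_diff]
    have hfam := hf Bool (fun b => bif b then G.pairOfVertex u else G.pairOfVertex v)
      (G.pairOfVertex u) (by rw [G.joinH_bool]; exact hjH) (by rw [G.joinS_bool]; exact hjS)
    rw [hfam, iInf_bool_eq]
    exact inf_le_right
  · intro H hH v hv
    refine le_iInf fun w => ?_
    show f (G.pairOfBreaking H v hH hv) ≤ f (G.pairOfVertex w.1)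
    have hjH : H = G.join2H (G.pairOfBreaking H v hH hv) (G.pairOfVertex w.1) := by
      refine (G.sSat_eq_of ?_ hH ?_ ?_).symm
      · exact Set.union_subset subset_rfl (G.Hv_subset hH w.2)
      · intro x hx hr
        exfalso
        have hx' : x = v := by
          rcases hx with hx | hx
          · exact hx
          · exact absurd hx (Set.notMem_empty x)
        subst hx'
        obtain ⟨e, he, hre⟩ := hv.2.2.2
        exact hre (hr e he)
      · exact fun x hx => G.subset_sSat _ _ (Or.inl hx)
    have hjS : ({v} : Set V) =
        G.join2S (G.pairOfBreaking H v hH hv) (G.pairOfVertex w.1) := by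
      rw [Graph.join2S, ← hjH]
      ext x
      constructor
      · intro hx
        have hx' : x = v := hx
        subst hx'
        exact ⟨Or.inl rfl, hv.2.1⟩
      · rintro ⟨hx | hx, _⟩
        · exact hx
        · exact absurd hx (Set.notMem_empty x)
    have hfam := hf Bool
      (fun b => bif b then G.pairOfBreaking H v hH hv else G.pairOfVertex w.1)
      (G.pairOfBreaking H v hH hv)
      (by rw [G.joinH_bool]; exact hjH) (by rw [G.joinS_bool]; exact hjS)
    rw [hfam, iInf_bool_eq]
    exact inf_le_right

lemma part4 (φ : G.ExtVertex → Ideal R) (hφ : G.IsGradedIdealFun φ) :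
    G.phiOf (G.satFunOf φ) = φ := by
  funext x
  cases x with
  | inl u =>
    show G.phiPair φ (G.pairOfVertex u) = φ (Sum.inl u)
    apply le_antisymm
    · exact G.phiPair_le_inl φ _ (G.mem_Hv u)
    · exact le_inf (le_iInf fun w => hφ.2.1 u w.1 (G.Hv_mono w.2))
        (le_iInf fun v => absurd v.2 (Set.notMem_empty _))
  | inr pr =>
    obtain ⟨⟨H, v⟩, hH, hv⟩ := pr
    show G.phiPair φ (G.pairOfBreaking H v hH hv) = φ (Sum.inr ⟨(H, v), hH, hv⟩)
    apply le_antisymm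
    · exact G.phiPair_le_inr φ (G.pairOfBreaking H v hH hv) rfl
    · refine le_inf (le_iInf fun w => (hφ.2.2 H hH v hv).trans (iInf_le _ w))
        (le_iInf fun v' => ?_)
      obtain ⟨v', hv'⟩ := v'
      have hv'' : v' = v := hv'
      subst hv''
      exact le_rfl



/-- The assignments `f ↦ φ_f` and `φ ↦ f_φ` are mutually inverse
bijections between saturated functions `T_E^* → L(R)` and graded ideal functions
`Ê⁰ → L(R)`. -/
theorem statement_6 :
    (∀ f : G.APair → Ideal R, G.IsSaturatedFun f → G.IsGradedIdealFun (G.phiOf f)) ∧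
    (∀ φ : G.ExtVertex → Ideal R, G.IsGradedIdealFun φ → G.IsSaturatedFun (G.satFunOf φ)) ∧
    (∀ f : G.APair → Ideal R, G.IsSaturatedFun f → G.satFunOf (G.phiOf f) = f) ∧
    (∀ φ : G.ExtVertex → Ideal R, G.IsGradedIdealFun φ → G.phiOf (G.satFunOf φ) = φ) := by
  exact ⟨G.part1, G.part2, fun f hf => funext fun p => G.phiPair_phiOf f hf p, G.part4⟩



end Graph

end LPAQuot
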